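/- The first subleading Harer–Zagier coefficient has the closed form b(g, g−2) = (1/5) · 2^{g−2} · (6g−5)!! / (3^{g−2} · (g−2)!) for every integer g ≥ 2, where (6g−5)!! denotes the double factorial. -/

import Mathlib

/-- Closed form for the first subleading Harer–Zagier coefficient:
`b g (g-2) = (1/5) * 2^(g-2) * (6g-5)‼ / (3^(g-2) * (g-2)!)` for every `g ≥ 2`. -/
theorem harer_zagier_first_subleading_coefficient
    (b : ℕ → ℤ → ℚ)
    (hb1 : b 1 0 = 1)
    (hb0 : ∀ g : ℕ, 1 ≤ g → ∀ k : ℤ, (k < 0 ∨ (g : ℤ) - 1 < k) → b g k = 0)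
    (hrec : ∀ g : ℕ, 1 ≤ g → ∀ k : ℤ,
      (4 * (g : ℚ) + 2 * (k : ℚ) + 6) * b (g + 1) k =
        (4 * (g : ℚ) + 2 * (k : ℚ) + 1) * (4 * (g : ℚ) + 2 * (k : ℚ) + 3) *
          ((4 * (g : ℚ) + 2 * (k : ℚ) + 2) * b g k
            + 4 * (4 * (g : ℚ) + 2 * (k : ℚ) - 1) * b g (k - 1))) :
    ∀ g : ℕ, 2 ≤ g →
      b g ((g : ℤ) - 2) =
        (1 / 5 : ℚ) * ((2 ^ (g - 2) * Nat.doubleFactorial (6 * g - 5) : ℕ) : ℚ) /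
          ((3 ^ (g - 2) * Nat.factorial (g - 2) : ℕ) : ℚ) := by
  have lead : ∀ m : ℕ, b (m + 1) (m : ℤ) =
      ((2 ^ m * Nat.doubleFactorial (6 * m + 3) : ℕ) : ℚ) /
        ((3 ^ (m + 1) * Nat.factorial (m + 1) : ℕ) : ℚ) := by
    intro m
    induction m with
    | zero => simpa [Nat.doubleFactorial, Nat.factorial] using hb1
    | succ m ih =>
      have hz : b (m + 1) (((m + 1 : ℕ) : ℤ)) = 0 := by
        apply hb0 (m + 1) (by omega)
        right; push_cast; linarith
      have h := hrec (m + 1) (by omega) ((m + 1 : ℕ) : ℤ)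
      rw [show ((m + 1 : ℕ) : ℤ) - 1 = (m : ℤ) by push_cast; ring, hz, ih] at h
      have hc : (4 * ((m + 1 : ℕ) : ℚ) + 2 * (((m + 1 : ℕ) : ℤ) : ℚ) + 6) ≠ 0 := by
        push_cast; positivity
      rw [mul_comm] at h
      have hX := eq_div_of_mul_eq hc h
      show b (m + 1 + 1) (((m + 1 : ℕ) : ℤ)) = _
      rw [hX]
      rw [show Nat.factorial (m + 1 + 1) = (m + 2) * Nat.factorial (m + 1) from
        Nat.factorial_succ _]
      have hd1 : ((3 ^ (m + 1) * Nat.factorial (m + 1) : ℕ) : ℚ) ≠ 0 := by positivity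
      have hdf : Nat.doubleFactorial (6 * (m + 1) + 3) =
          (6 * m + 9) * ((6 * m + 7) * ((6 * m + 5) * Nat.doubleFactorial (6 * m + 3))) := by
        rw [show 6 * (m + 1) + 3 = 6 * m + 3 + 2 + 2 + 2 by ring]
        simp only [Nat.doubleFactorial_add_two]
      rw [hdf]
      field_simp
      push_cast
      ring
  have main : ∀ m : ℕ, b (m + 2) (m : ℤ) =
      (1 / 5 : ℚ) * ((2 ^ m * Nat.doubleFactorial (6 * m + 7) : ℕ) : ℚ) /
        ((3 ^ m * Nat.factorial m : ℕ) : ℚ) := by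
    intro m
    induction m with
    | zero =>
      have hz : b 1 (-1 : ℤ) = 0 := hb0 1 le_rfl (-1) (Or.inl (by norm_num))
      have h := hrec 1 le_rfl 0
      norm_num [hb1, hz] at h
      show b 2 0 = _
      norm_num [Nat.doubleFactorial, Nat.factorial]
      linarith
    | succ m ih =>
      have hL := lead (m + 1)
      have h := hrec (m + 2) (by omega) ((m + 1 : ℕ) : ℤ)
      rw [show ((m + 1 : ℕ) : ℤ) - 1 = (m : ℤ) by push_cast; ring] at h
      rw [show b (m + 2) (((m + 1 : ℕ)) : ℤ) =
        ((2 ^ (m + 1) * Nat.doubleFactorial (6 * (m + 1) + 3) : ℕ) : ℚ) /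
          ((3 ^ (m + 1 + 1) * Nat.factorial (m + 1 + 1) : ℕ) : ℚ) from hL, ih] at h
      have hc : (4 * ((m + 2 : ℕ) : ℚ) + 2 * (((m + 1 : ℕ) : ℤ) : ℚ) + 6) ≠ 0 := by
        push_cast; positivity
      rw [mul_comm] at h
      have hX := eq_div_of_mul_eq hc h
      show b (m + 2 + 1) (((m + 1 : ℕ) : ℤ)) = _
      rw [hX]
      rw [show Nat.factorial (m + 1 + 1) = (m + 2) * ((m + 1) * Nat.factorial m) by
        rw [Nat.factorial_succ, Nat.factorial_succ],
        show Nat.factorial (m + 1) = (m + 1) * Nat.factorial m from Nat.factorial_succ _]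
      have hd1 : ((3 ^ m * Nat.factorial m : ℕ) : ℚ) ≠ 0 := by positivity
      have hdf1 : Nat.doubleFactorial (6 * (m + 1) + 3) =
          (6 * m + 9) * Nat.doubleFactorial (6 * m + 7) := by
        rw [show 6 * (m + 1) + 3 = 6 * m + 7 + 2 by ring]
        simp only [Nat.doubleFactorial_add_two]
      have hdf2 : Nat.doubleFactorial (6 * (m + 1) + 7) =
          (6 * m + 13) * ((6 * m + 11) * ((6 * m + 9) * Nat.doubleFactorial (6 * m + 7))) := by
        rw [show 6 * (m + 1) + 7 = 6 * m + 7 + 2 + 2 + 2 by ring]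
        simp only [Nat.doubleFactorial_add_two]
      rw [hdf1, hdf2]
      field_simp
      push_cast
      ring
  intro g hg
  obtain ⟨m, rfl⟩ : ∃ m, g = m + 2 := ⟨g - 2, by omega⟩
  have hm := main m
  rw [show ((m + 2 : ℕ) : ℤ) - 2 = (m : ℤ) by push_cast; ring, hm]
  rw [show 6 * (m + 2) - 5 = 6 * m + 7 by omega]
  norm_num
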